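/- Let X be a finite preordered set, R a commutative ring, θ a commuting map on I(X,R), and write θ(e_{ij}) = Σ C^{ij}_{xy} e_{xy}. Then for all i < j < l one has C^{ij}_{ij} = C^{jl}_{jl}, and for all i < l one has C^{il}_{il} = C^{ii}_{ii} − C^{ii}_{ll}. -/
import Mathlib


variable {X R : Type*} [Preorder X] [LocallyFiniteOrder X] [DecidableEq X] [CommRing R]

/-- Membership in the incidence algebra `I(X,R)`: supported on pairs `x ≤ y`. -/
def IsInc (f : X → X → R) : Prop := ∀ x y : X, ¬ x ≤ y → f x y = 0

/-- The convolution product of the incidence algebra. -/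
def conv (f g : X → X → R) : X → X → R :=
  fun x y => ∑ z ∈ Finset.Icc x y, f x z * g z y

/-- The matrix unit `e_{ij}` of the incidence algebra. -/
def eunit (i j : X) : X → X → R := fun x y => if x = i ∧ y = j then 1 else 0

/-- A commuting map on the incidence algebra: an `R`-linear map `θ : I(X,R) → I(X,R)`
with `[θ(f), f] = 0` for all `f`. -/
structure IsCommMap (θ : (X → X → R) → X → X → R) : Prop where
  map_inc : ∀ f, IsInc f → IsInc (θ f)
  map_add : ∀ f g, IsInc f → IsInc g → θ (f + g) = θ f + θ g
  map_smul : ∀ (r : R) (f), IsInc f → θ (r • f) = r • θ f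
  comm : ∀ f, IsInc f → conv (θ f) f = conv f (θ f)

lemma isInc_eunit {i j : X} (h : i ≤ j) : IsInc (eunit i j : X → X → R) := by
  intro x y hxy
  simp only [eunit, ite_eq_right_iff, and_imp]
  rintro rfl rfl
  exact absurd h hxy

lemma isInc_add {f g : X → X → R} (hf : IsInc f) (hg : IsInc g) : IsInc (f + g) := by
  intro x y h
  simp [Pi.add_apply, hf x y h, hg x y h]

lemma conv_add_left (f g h : X → X → R) (x y : X) :
    conv (f + g) h x y = conv f h x y + conv g h x y := by
  simp [conv, add_mul, Finset.sum_add_distrib]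

lemma conv_add_right (f g h : X → X → R) (x y : X) :
    conv f (g + h) x y = conv f g x y + conv f h x y := by
  simp [conv, mul_add, Finset.sum_add_distrib]

lemma conv_eunit_right (f : X → X → R) (i j x y : X) :
    conv f (eunit i j) x y = if y = j ∧ i ∈ Finset.Icc x y then f x i else 0 := by
  unfold conv eunit
  by_cases hy : y = j
  · subst hy
    simp only [eq_self_iff_true, and_true, true_and, mul_ite, mul_one, mul_zero,
      Finset.sum_ite_eq', if_true]
  · simp [hy]

lemma conv_eunit_left (f : X → X → R) (i j x y : X) :
    conv (eunit i j) f x y = if x = i ∧ j ∈ Finset.Icc x y then f j y else 0 := by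
  unfold conv eunit
  by_cases hx : x = i
  · subst hx
    simp only [eq_self_iff_true, and_true, true_and, ite_mul, one_mul, zero_mul,
      Finset.sum_ite_eq', if_true]
  · simp [hx]

lemma polar {θ : (X → X → R) → X → X → R} (hθ : IsCommMap θ)
    {f g : X → X → R} (hf : IsInc f) (hg : IsInc g) (x y : X) :
    conv (θ f) g x y + conv (θ g) f x y = conv f (θ g) x y + conv g (θ f) x y := by
  have h := hθ.comm (f + g) (isInc_add hf hg)
  rw [hθ.map_add f g hf hg] at h
  have h1 := congrFun (congrFun h x) y
  simp only [conv_add_left, conv_add_right] at h1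
  have h2 := congrFun (congrFun (hθ.comm f hf) x) y
  have h3 := congrFun (congrFun (hθ.comm g hg) x) y
  linear_combination h1 - h2 - h3

/-- writing `C^{ij}_{xy} := θ(e_{ij})(x,y)`, one has `C^{ij}_{ij} = C^{jl}_{jl}`
for `i < j < l` (relation (R5)), and `C^{il}_{il} = C^{ii}_{ii} - C^{ii}_{ll}` for `i < l`
(relation (R1)). -/
theorem coeff_relations [Finite X]
    (θ : (X → X → R) → X → X → R) (hθ : IsCommMap θ)
    (C : X → X → X → X → R) (hC : ∀ i j x y, C i j x y = θ (eunit i j) x y) :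
    (∀ i j l : X, i ≤ j → i ≠ j → j ≤ l → j ≠ l → C i j i j = C j l j l) ∧
      (∀ i l : X, i ≤ l → i ≠ l → C i l i l = C i i i i - C i i l l) := by
  constructor
  · intro i j l hij hij' hjl hjl'
    have h := polar hθ (isInc_eunit hij) (isInc_eunit hjl) i l
    rw [conv_eunit_right, conv_eunit_right, conv_eunit_left, conv_eunit_left] at h
    have hjm : j ∈ Finset.Icc i l := Finset.mem_Icc.mpr ⟨hij, hjl⟩
    simp [hjm, Ne.symm hjl', hij', hC] at h
    rw [hC, hC, h]
  · intro i l hil hil'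
    have h := polar hθ (isInc_eunit (le_refl i)) (isInc_eunit hil) i l
    rw [conv_eunit_right, conv_eunit_right, conv_eunit_left, conv_eunit_left] at h
    have him : i ∈ Finset.Icc i l := Finset.mem_Icc.mpr ⟨le_refl i, hil⟩
    have hlm : l ∈ Finset.Icc i l := Finset.mem_Icc.mpr ⟨hil, le_refl l⟩
    simp [him, hlm, Ne.symm hil', hC] at h
    rw [hC, hC, hC]
    linear_combination -h
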